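/- Assume the following: for every nonempty open subset U of G = {(x, y) ∈ ℝ² : x > 1, −1 < y < 0} there exists c_U such that for every real quadratic field discriminant D > c_U there is a reduced element α of ℚ(√D) with (α, α') ∈ U. Then lim_{D→∞} H_min(D)/√D = 1/√5, where D runs through the discriminants of real quadratic fields; that is, for every ε > 0 there is a bound B such that every real quadratic field discriminant D > B satisfies 1/√5 ≤ H_min(D)/√D ≤ 1/√5 + ε. -/

import Mathlib

open NumberField IntermediateField

/-- The region `G = {(x, y) ∈ ℝ² : x > 1, −1 < y < 0}`. -/
def regionG : Set (ℝ × ℝ) := {p | 1 < p.1 ∧ -1 < p.2 ∧ p.2 < 0}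

open Module

section Auxiliary

lemma smul_eq_cast_mul' {K : Type} [Field K] [NumberField K] (q : ℚ) (x : K) :
    q • x = (q : K) * x := by
  rw [Algebra.smul_def, eq_ratCast]

lemma gen_of_not_bot {K : Type} [Field K] [NumberField K] (hr : finrank ℚ K = 2)
    (α : K) (hirr : ∀ q : ℚ, (q : K) ≠ α) : ℚ⟮α⟯ = ⊤ := by
  have h1 : ℚ⟮α⟯ ≠ ⊥ := by
    rw [Ne, adjoin_simple_eq_bot_iff]
    intro h
    obtain ⟨q, hq⟩ := IntermediateField.mem_bot.1 h
    exact hirr q (by rw [← eq_ratCast (algebraMap ℚ K) q]; exact hq)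
  have h2 : finrank ℚ (ℚ⟮α⟯ : IntermediateField ℚ K) ≠ 1 := by
    rw [Ne, IntermediateField.finrank_eq_one_iff]; exact h1
  have h3 : finrank ℚ (ℚ⟮α⟯ : IntermediateField ℚ K) * finrank (ℚ⟮α⟯ : IntermediateField ℚ K) K
      = finrank ℚ K := Module.finrank_mul_finrank ℚ _ K
  rw [hr] at h3
  have hdvd : finrank ℚ (ℚ⟮α⟯ : IntermediateField ℚ K) ∣ 2 := ⟨_, h3.symm⟩
  have h4 : finrank ℚ (ℚ⟮α⟯ : IntermediateField ℚ K) = 2 := by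
    rcases (Nat.prime_two).eq_one_or_self_of_dvd _ hdvd with h | h
    · exact absurd h h2
    · exact h
  exact IntermediateField.eq_of_le_of_finrank_eq le_top (by rw [h4, finrank_top', hr])

lemma not_bot_of_gen {K : Type} [Field K] [NumberField K] (hr : finrank ℚ K = 2)
    (α : K) (hgen : ℚ⟮α⟯ = ⊤) : ∀ q : ℚ, (q : K) ≠ α := by
  intro q hq
  have hmem : α ∈ (⊥ : IntermediateField ℚ K) :=
    IntermediateField.mem_bot.2 ⟨q, by rw [eq_ratCast]; exact hq⟩
  have hb : ℚ⟮α⟯ = ⊥ := adjoin_simple_eq_bot_iff.2 hmem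
  rw [hgen] at hb
  have h1 : finrank ℚ (⊤ : IntermediateField ℚ K) = 1 := by
    rw [hb, IntermediateField.finrank_bot]
  rw [finrank_top', hr] at h1
  norm_num at h1

lemma pair_li {K : Type} [Field K] [NumberField K]
    (β : K) (hirr : ∀ q : ℚ, (q : K) ≠ β) : LinearIndependent ℚ ![(1 : K), β] := by
  rw [LinearIndependent.pair_iff]
  intro s t hst
  rw [smul_eq_cast_mul', smul_eq_cast_mul'] at hst
  rcases eq_or_ne t 0 with ht | ht
  · subst ht
    refine ⟨?_, rfl⟩
    push_cast at hst
    simp at hst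
    exact_mod_cast hst
  · exact absurd (show ((-s / t : ℚ) : K) = β by
      push_cast
      have ht' : (t : K) ≠ 0 := by exact_mod_cast ht
      field_simp
      linear_combination -hst) (hirr _)

lemma discr_pair_eq {K : Type} [Field K] [NumberField K] (hr : finrank ℚ K = 2)
    (β : K) (b m : ℤ) (heq : β ^ 2 + (b : K) * β + (m : K) = 0)
    (hirr : ∀ q : ℚ, (q : K) ≠ β) :
    Algebra.discr ℚ ![(1 : K), β] = (b : ℚ) ^ 2 - 4 * m := by
  have li := pair_li β hirr
  let B : Basis (Fin 2) ℚ K := basisOfLinearIndependentOfCardEqFinrank li (by simp [hr])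
  have hB : ⇑B = ![(1 : K), β] := coe_basisOfLinearIndependentOfCardEqFinrank _ _
  have hB0 : B 0 = 1 := by rw [hB]; rfl
  have hB1 : B 1 = β := by rw [hB]; rfl
  have htr1 : Algebra.trace ℚ K 1 = 2 := by
    have h := Algebra.trace_algebraMap (R := ℚ) (S := K) 1
    rw [map_one, hr] at h
    rw [h]; norm_num
  have hβsq : β ^ 2 = (-(b : ℚ)) • β + (-(m : ℚ)) • (1 : K) := by
    rw [smul_eq_cast_mul', smul_eq_cast_mul']
    push_cast
    linear_combination heq
  have htrβ : Algebra.trace ℚ K β = -b := by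
    rw [Algebra.trace_eq_matrix_trace B, Matrix.trace_fin_two]
    rw [Algebra.leftMulMatrix_eq_repr_mul, Algebra.leftMulMatrix_eq_repr_mul]
    have e0 : β * B 0 = B 1 := by rw [hB0, hB1, mul_one]
    have e1 : β * B 1 = (-(m : ℚ)) • B 0 + (-(b : ℚ)) • B 1 := by
      rw [hB0, hB1, ← pow_two, hβsq]; ring
    rw [e0, e1, B.repr_self, map_add, map_smul, map_smul, B.repr_self, B.repr_self]
    simp [Finsupp.single_apply]
  have htrsq : Algebra.trace ℚ K (β ^ 2) = (b : ℚ) ^ 2 - 2 * m := by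
    rw [hβsq, map_add, map_smul, map_smul, htrβ, htr1]
    simp only [smul_eq_mul]
    ring
  rw [Algebra.discr_def, Matrix.det_fin_two]
  have tm : ∀ i j, Algebra.traceMatrix ℚ ![(1 : K), β] i j
      = Algebra.trace ℚ K (![(1 : K), β] i * ![(1 : K), β] j) := by
    intro i j
    rw [Algebra.traceMatrix_apply, Algebra.traceForm_apply]
  rw [tm, tm, tm, tm]
  show Algebra.trace ℚ K ((1 : K) * 1) * Algebra.trace ℚ K (β * β)
      - Algebra.trace ℚ K ((1 : K) * β) * Algebra.trace ℚ K (β * 1) = _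
  rw [mul_one, one_mul, mul_one, ← pow_two, htr1, htrβ, htrsq]
  ring

lemma discr_pair_sq {K : Type} [Field K] [NumberField K] (hr : finrank ℚ K = 2)
    (β : K) (hβ : IsIntegral ℤ β) :
    ∃ e : ℤ, Algebra.discr ℚ ![(1 : K), β] = (e : ℚ) ^ 2 * (discr K : ℚ) := by
  classical
  have hcard : Fintype.card (Free.ChooseBasisIndex ℤ (𝓞 K)) = 2 := by
    rw [← Module.finrank_eq_card_chooseBasisIndex, RingOfIntegers.rank, hr]
  let eqv : Free.ChooseBasisIndex ℤ (𝓞 K) ≃ Fin 2 := Fintype.equivFinOfCardEq hcard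
  let b : Basis (Fin 2) ℚ K := (integralBasis K).reindex eqv
  let y : Fin 2 → 𝓞 K := ![1, ⟨β, hβ⟩]
  have hy : ∀ i, algebraMap (𝓞 K) K (y i) = ![(1 : K), β] i := by
    intro i
    fin_cases i <;> simp [y] <;> rfl
  let Q : Matrix (Fin 2) (Fin 2) ℤ :=
    fun i j => (RingOfIntegers.basis K).repr (y i) (eqv.symm j)
  have hrepr : ∀ i j, b.repr (![(1 : K), β] i) j = ((Q i j : ℤ) : ℚ) := by
    intro i j
    rw [← hy i]
    show ((integralBasis K).reindex eqv).repr _ j = _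
    rw [Basis.repr_reindex_apply, integralBasis_repr_apply]
    simp [Q]
  let P : Matrix (Fin 2) (Fin 2) ℚ := Q.map (Int.castRingHom ℚ)
  have hv : ![(1 : K), β] = Matrix.mulVec (P.map (algebraMap ℚ K)) ⇑b := by
    funext i
    have := (b.sum_repr (![(1 : K), β] i)).symm
    rw [this]
    simp only [Matrix.mulVec, dotProduct, Matrix.map_apply]
    congr 1
    funext j
    rw [hrepr i j, Algebra.smul_def]
    rfl
  have hdiscr : Algebra.discr ℚ ![(1 : K), β] = P.det ^ 2 * Algebra.discr ℚ ⇑b := by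
    rw [hv, Algebra.discr_of_matrix_mulVec]
  have hb : Algebra.discr ℚ ⇑b = (discr K : ℚ) := by
    have : ⇑b = ⇑(integralBasis K) ∘ ⇑eqv.symm := Basis.coe_reindex _ _
    rw [this, Algebra.discr_reindex, ← coe_discr]
  refine ⟨Q.det, ?_⟩
  rw [hdiscr, hb]
  congr 1
  have : P.det = (Int.castRingHom ℚ) Q.det := (RingHom.map_det (Int.castRingHom ℚ) Q).symm
  rw [this]
  simp

lemma key_discr {K : Type} [Field K] [NumberField K] (hr : finrank ℚ K = 2)
    (β : K) (hβ : IsIntegral ℤ β) (b m : ℤ)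
    (heq : β ^ 2 + (b : K) * β + (m : K) = 0)
    (hirr : ∀ q : ℚ, (q : K) ≠ β) :
    ∃ e : ℤ, e ≠ 0 ∧ b ^ 2 - 4 * m = e ^ 2 * discr K := by
  obtain ⟨e, he⟩ := discr_pair_sq hr β hβ
  have hT := discr_pair_eq hr β b m heq hirr
  have hQ : (b : ℚ) ^ 2 - 4 * m = (e : ℚ) ^ 2 * (discr K : ℚ) := by rw [← hT, he]
  have hZ : b ^ 2 - 4 * m = e ^ 2 * discr K := by exact_mod_cast hQ
  refine ⟨e, ?_, hZ⟩
  rintro rfl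
  norm_num at hZ
  have h0 : ((b ^ 2 - 4 * m : ℤ) : K) = 0 := by rw [hZ]; norm_num
  push_cast at h0
  have hsq : ((2 : K) * β + (b : K)) ^ 2 = 0 := by linear_combination 4 * heq + h0
  have h2 : (2 : K) * β + (b : K) = 0 := by
    exact pow_eq_zero_iff (n := 2) (by norm_num) |>.mp hsq
  apply hirr (-(b : ℚ) / 2)
  push_cast
  field_simp
  linear_combination -h2

lemma lower_int {K : Type} [Field K] [NumberField K] (hr : finrank ℚ K = 2)
    (hd : 0 < discr K) (α : K) (a b c : ℤ)
    (heq : (a : K) * α ^ 2 + (b : K) * α + (c : K) = 0)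
    (hgcd : Int.gcd (Int.gcd a b) c = 1)
    (hirr : ∀ q : ℚ, (q : K) ≠ α) :
    discr K ≤ b ^ 2 - 4 * (a * c) := by
  have ha : a ≠ 0 := by
    rintro rfl
    rcases eq_or_ne b 0 with hb | hb
    · subst hb
      norm_num at heq
      have : c = 0 := by exact_mod_cast heq
      subst this
      norm_num at hgcd
    · apply hirr (-(c : ℚ) / (b : ℚ))
      have hbK : (b : K) ≠ 0 := by exact_mod_cast hb
      push_cast
      field_simp
      push_cast at heq
      linear_combination -heq
  have haK : (a : K) ≠ 0 := by exact_mod_cast ha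
  set β := (a : K) * α with hβdef
  have hβirr : ∀ q : ℚ, (q : K) ≠ β := by
    intro q hq
    apply hirr (q / (a : ℚ))
    push_cast
    field_simp
    rw [hβdef] at hq
    linear_combination hq
  have hint : IsIntegral ℤ β := by
    refine ⟨Polynomial.X ^ 2 + Polynomial.C b * Polynomial.X + Polynomial.C (a * c), ?_, ?_⟩
    · monicity!
    · simp only [Polynomial.eval₂_add, Polynomial.eval₂_mul, Polynomial.eval₂_pow,
        Polynomial.eval₂_X, Polynomial.eval₂_C]
      simp only [algebraMap_int_eq, eq_intCast]
      push_cast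
      linear_combination (a : K) * heq
  have heq2 : β ^ 2 + (b : K) * β + ((a * c : ℤ) : K) = 0 := by
    push_cast
    linear_combination (a : K) * heq
  obtain ⟨e, he0, hE⟩ := key_discr hr β hint b (a * c) heq2 hβirr
  have h1 : 1 ≤ e ^ 2 := by nlinarith [Int.one_le_abs he0, sq_abs e]
  calc discr K = 1 * discr K := (one_mul _).symm
    _ ≤ e ^ 2 * discr K := by
        exact mul_le_mul_of_nonneg_right h1 hd.le
    _ = b ^ 2 - 4 * (a * c) := hE.symm

lemma exists_sqrt_discr (K : Type) [Field K] [NumberField K] (hr : finrank ℚ K = 2) :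
    ∃ σ : K, σ ^ 2 = ((discr K : ℤ) : K) ∧ ∀ q : ℚ, (q : K) ≠ σ := by
  obtain ⟨x, hx⟩ : ∃ x : K, x ∉ (⊥ : IntermediateField ℚ K) := by
    by_contra h
    push_neg at h
    have hbt : (⊥ : IntermediateField ℚ K) = ⊤ := eq_top_iff.2 fun z _ => h z
    have h1 : finrank ℚ (⊤ : IntermediateField ℚ K) = 1 := by
      rw [← hbt, IntermediateField.finrank_bot]
    rw [finrank_top', hr] at h1
    norm_num at h1
  have halgQ : IsAlgebraic ℚ x := (IsIntegral.of_finite ℚ x).isAlgebraic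
  have halg : IsAlgebraic ℤ x := (IsFractionRing.isAlgebraic_iff ℤ ℚ K).2 halgQ
  obtain ⟨d, hd0, hdint⟩ := halg.exists_integral_multiple
  let xi : integralClosure ℤ K := ⟨d • x, hdint⟩
  have hdx : ((d : ℤ) : K) * x = (xi : K) := by simp [xi, zsmul_eq_mul]
  set β : K := (xi : K) with hβdef
  have hβint : IsIntegral ℤ β := xi.2
  have hβx : ((d : ℤ) : K) * x = β := hdx
  have hβirr : ∀ q : ℚ, (q : K) ≠ β := by
    intro q hq
    apply hx
    have hdK : ((d : ℤ) : K) ≠ 0 := by exact_mod_cast hd0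
    refine IntermediateField.mem_bot.2 ⟨q / (d : ℚ), ?_⟩
    rw [eq_ratCast]
    push_cast
    rw [div_eq_iff hdK]
    linear_combination hq - hβx
  have hβQint : IsIntegral ℚ β := IsIntegral.of_finite ℚ β
  have htop : ℚ⟮β⟯ = ⊤ := gen_of_not_bot hr β hβirr
  have hdegQ : (minpoly ℚ β).natDegree = 2 := by
    rw [← IntermediateField.adjoin.finrank hβQint]
    rw [htop, finrank_top', hr]
  have hmap : minpoly ℚ β = (minpoly ℤ β).map (algebraMap ℤ ℚ) :=
    minpoly.isIntegrallyClosed_eq_field_fractions' ℚ hβint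
  have hmonic : (minpoly ℤ β).Monic := minpoly.monic hβint
  have hdegZ : (minpoly ℤ β).natDegree = 2 := by
    have := hmap ▸ hdegQ
    rwa [Polynomial.natDegree_map_eq_of_injective (fun u v huv => by exact_mod_cast huv)] at this
  set b : ℤ := (minpoly ℤ β).coeff 1 with hbdef
  set m : ℤ := (minpoly ℤ β).coeff 0 with hmdef
  have heqβ : β ^ 2 + (b : K) * β + (m : K) = 0 := by
    have haev := minpoly.aeval ℤ β
    rw [Polynomial.aeval_eq_sum_range, hdegZ] at haev
    rw [Finset.sum_range_succ, Finset.sum_range_succ, Finset.sum_range_one] at haev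
    have hc2 : (minpoly ℤ β).coeff 2 = 1 := by
      have := hmonic.coeff_natDegree
      rwa [hdegZ] at this
    rw [hc2] at haev
    simp only [zsmul_eq_mul, pow_zero, pow_one, mul_one, one_smul] at haev
    linear_combination haev
  obtain ⟨e, he0, hE⟩ := key_discr hr β hβint b m heqβ hβirr
  have heK : ((e : ℤ) : K) ≠ 0 := by exact_mod_cast he0
  refine ⟨((2 : K) * β + (b : K)) / ((e : ℤ) : K), ?_, ?_⟩
  · have hnum : ((2 : K) * β + (b : K)) ^ 2 = ((b ^ 2 - 4 * m : ℤ) : K) := by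
      push_cast
      linear_combination 4 * heqβ
    rw [div_pow, hnum, hE]
    push_cast
    field_simp
  · intro q hq
    apply hβirr (((e : ℚ) * q - b) / 2)
    rw [eq_div_iff heK] at hq
    push_cast
    rw [div_eq_iff (by norm_num : (2 : K) ≠ 0)]
    linear_combination hq

def goodSet (h : ℝ) : Set (ℝ × ℝ) :=
  {p | 1 < p.1 ∧ -1 < p.2 ∧ p.2 < 0 ∧ 1 < h * (p.1 - p.2) ∧
    |p.1 + p.2| < h * (p.1 - p.2) ∧ |p.1 * p.2| < h * (p.1 - p.2)}

lemma goodSet_open (h : ℝ) : IsOpen (goodSet h) := by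
  have hcont : Continuous fun p : ℝ × ℝ => h * (p.1 - p.2) :=
    continuous_const.mul (continuous_fst.sub continuous_snd)
  have h1 : Continuous fun p : ℝ × ℝ => |p.1 + p.2| := (continuous_fst.add continuous_snd).abs
  have h2 : Continuous fun p : ℝ × ℝ => |p.1 * p.2| := (continuous_fst.mul continuous_snd).abs
  unfold goodSet
  simp only [Set.setOf_and]
  exact (isOpen_lt continuous_const continuous_fst).inter
    ((isOpen_lt continuous_const continuous_snd).inter
    ((isOpen_lt continuous_snd continuous_const).inter
    ((isOpen_lt continuous_const hcont).inter
    ((isOpen_lt h1 hcont).inter (isOpen_lt h2 hcont)))))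

lemma goodSet_mem (ε : ℝ) (hε : 0 < ε) :
    ((1 + Real.sqrt 5) / 2, (1 - Real.sqrt 5) / 2) ∈ goodSet (1 / Real.sqrt 5 + ε) := by
  have hs2 : Real.sqrt 5 ^ 2 = 5 := Real.sq_sqrt (by norm_num)
  have hs0 : 0 < Real.sqrt 5 := Real.sqrt_pos.2 (by norm_num)
  have hs2' : 2 < Real.sqrt 5 := by nlinarith
  have hs3 : Real.sqrt 5 < 3 := by nlinarith
  have hinv : (1 / Real.sqrt 5) * Real.sqrt 5 = 1 := by field_simp
  have hεs : 0 < ε * Real.sqrt 5 := mul_pos hε hs0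
  refine ⟨by dsimp only; nlinarith, by dsimp only; nlinarith, by dsimp only; nlinarith, ?_, ?_, ?_⟩
  · show 1 < (1 / Real.sqrt 5 + ε) * ((1 + Real.sqrt 5) / 2 - (1 - Real.sqrt 5) / 2)
    rw [show (1 + Real.sqrt 5) / 2 - (1 - Real.sqrt 5) / 2 = Real.sqrt 5 by ring,
      add_mul, hinv]
    linarith
  · show |(1 + Real.sqrt 5) / 2 + (1 - Real.sqrt 5) / 2| < _
    rw [show (1 + Real.sqrt 5) / 2 + (1 - Real.sqrt 5) / 2 = 1 by ring,
      show (1 + Real.sqrt 5) / 2 - (1 - Real.sqrt 5) / 2 = Real.sqrt 5 by ring,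
      abs_one, add_mul, hinv]
    linarith
  · show |(1 + Real.sqrt 5) / 2 * ((1 - Real.sqrt 5) / 2)| < _
    rw [show (1 + Real.sqrt 5) / 2 * ((1 - Real.sqrt 5) / 2) = -1 by linear_combination (-1/4) * hs2,
      show (1 + Real.sqrt 5) / 2 - (1 - Real.sqrt 5) / 2 = Real.sqrt 5 by ring,
      abs_neg, abs_one, add_mul, hinv]
    linarith

lemma bounds_of_mem (h D : ℝ) (hD : 0 < D) (a b c : ℤ) (ha : 0 < a)
    (hmem : (((b : ℝ) + Real.sqrt D) / (2 * a), ((b : ℝ) - Real.sqrt D) / (2 * a)) ∈ goodSet h)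
    (hdisc : ((b : ℝ)) ^ 2 - 4 * (a : ℝ) * (c : ℝ) = D) :
    |(a : ℝ)| ≤ h * Real.sqrt D ∧ |(b : ℝ)| ≤ h * Real.sqrt D ∧ |(c : ℝ)| ≤ h * Real.sqrt D := by
  have haR : (0 : ℝ) < a := by exact_mod_cast ha
  have haR' : (a : ℝ) ≠ 0 := ne_of_gt haR
  have hs0 : 0 < Real.sqrt D := Real.sqrt_pos.2 hD
  have hs2 : Real.sqrt D ^ 2 = D := Real.sq_sqrt hD.le
  obtain ⟨h1, h2, h3, h4, h5, h6⟩ := hmem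
  set x := ((b : ℝ) + Real.sqrt D) / (2 * a) with hx
  set y := ((b : ℝ) - Real.sqrt D) / (2 * a) with hy
  have hxy : x - y = Real.sqrt D / a := by rw [hx, hy]; field_simp; ring
  have hxpy : x + y = (b : ℝ) / a := by rw [hx, hy]; field_simp; ring
  have hxty : x * y = (c : ℝ) / a := by
    rw [hx, hy]
    rw [div_mul_div_comm]
    rw [show ((b : ℝ) + Real.sqrt D) * ((b : ℝ) - Real.sqrt D) = (b : ℝ) ^ 2 - Real.sqrt D ^ 2 by
      ring, hs2, ← hdisc]
    field_simp
    ring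
  rw [hxy] at h4 h5 h6
  rw [hxpy] at h5
  rw [hxty] at h6
  rw [← mul_div_assoc] at h4 h5 h6
  have hb : |(b : ℝ)| < h * Real.sqrt D := by
    rw [abs_div, abs_of_pos haR] at h5
    exact (div_lt_div_iff_of_pos_right haR).1 h5
  have hc : |(c : ℝ)| < h * Real.sqrt D := by
    rw [abs_div, abs_of_pos haR] at h6
    exact (div_lt_div_iff_of_pos_right haR).1 h6
  have hA : |(a : ℝ)| < h * Real.sqrt D := by
    rw [abs_of_pos haR]
    have := (lt_div_iff₀ haR).1 h4
    linarith
  exact ⟨hA.le, hb.le, hc.le⟩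

lemma gcd_norm (a b c : ℤ) (ha : a ≠ 0) :
    ∃ a' b' c' : ℤ, a = (Int.gcd (Int.gcd a b) c : ℤ) * a' ∧
      b = (Int.gcd (Int.gcd a b) c : ℤ) * b' ∧ c = (Int.gcd (Int.gcd a b) c : ℤ) * c' ∧
      Int.gcd (Int.gcd a' b') c' = 1 := by
  set g : ℕ := Int.gcd (Int.gcd a b) c with hg
  have hg0 : g ≠ 0 := by
    intro h
    rw [hg] at h
    have h1 := Int.gcd_eq_zero_iff.1 h
    have h2 : Int.gcd a b = 0 := by exact_mod_cast h1.1
    exact ha (Int.gcd_eq_zero_iff.1 h2).1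
  have hda : (g : ℤ) ∣ a :=
    dvd_trans (dvd_trans (Int.gcd_dvd_left _ _) (Int.gcd_dvd_left _ _)) dvd_rfl
  have hdb : (g : ℤ) ∣ b := dvd_trans (Int.gcd_dvd_left _ _) (Int.gcd_dvd_right _ _)
  have hdc : (g : ℤ) ∣ c := Int.gcd_dvd_right _ _
  obtain ⟨a', ha'⟩ := hda
  obtain ⟨b', hb'⟩ := hdb
  obtain ⟨c', hc'⟩ := hdc
  refine ⟨a', b', c', ha', hb', hc', ?_⟩
  have hkey : g = g * Int.gcd (Int.gcd a' b') c' := by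
    conv_lhs => rw [hg, ha', hb', hc']
    rw [Int.gcd_mul_left, Int.natAbs_natCast]
    rw [show ((g * Int.gcd a' b' : ℕ) : ℤ) = (g : ℤ) * (Int.gcd a' b' : ℤ) by push_cast; ring]
    rw [Int.gcd_mul_left, Int.natAbs_natCast]
  exact (mul_eq_left₀ hg0).1 hkey.symm

lemma lower_real (D : ℝ) (hD : 0 < D) (a b c : ℤ)
    (hle : D ≤ ((b ^ 2 - 4 * (a * c) : ℤ) : ℝ)) :
    (1 / Real.sqrt 5) * Real.sqrt D ≤ ((max |a| (max |b| |c|) : ℤ) : ℝ) := by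
  set H : ℝ := ((max |a| (max |b| |c|) : ℤ) : ℝ) with hH
  have hHa : |(a : ℝ)| ≤ H := by rw [hH]; exact_mod_cast le_max_left |a| (max |b| |c|)
  have hHb : |(b : ℝ)| ≤ H := by
    rw [hH]; exact_mod_cast le_trans (le_max_left |b| |c|) (le_max_right |a| _)
  have hHc : |(c : ℝ)| ≤ H := by
    rw [hH]; exact_mod_cast le_trans (le_max_right |b| |c|) (le_max_right |a| _)
  have hH0 : 0 ≤ H := le_trans (abs_nonneg _) hHa
  have h5 : D ≤ 5 * H ^ 2 := by
    push_cast at hle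
    nlinarith [sq_abs (b : ℝ), neg_abs_le ((a : ℝ) * (c : ℝ)), abs_mul (a : ℝ) (c : ℝ),
      mul_le_mul hHa hHc (abs_nonneg (c : ℝ)) hH0,
      pow_le_pow_left₀ (abs_nonneg (b : ℝ)) hHb 2]
  have hsq : Real.sqrt D ≤ Real.sqrt 5 * H := by
    have h' : Real.sqrt D ≤ Real.sqrt (5 * H ^ 2) := Real.sqrt_le_sqrt h5
    rwa [Real.sqrt_mul (by norm_num) (H ^ 2), Real.sqrt_sq hH0] at h'
  have h5s : 0 < Real.sqrt 5 := Real.sqrt_pos.2 (by norm_num)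
  rw [one_div, inv_mul_eq_div, div_le_iff₀ h5s]
  nlinarith [hsq]

end Auxiliary

/-- Assume that for every nonempty open subset `U` of `G` there is `c_U`
such that for every real quadratic field discriminant `D > c_U` there is a reduced
element `α = (b + √D)/(2a)` (with `a, b, c ∈ ℤ`, `b² − 4ac = D`) of `ℚ(√D)` with
`(α, α') ∈ U`. Then `lim_{D→∞} H_min(D)/√D = 1/√5`: for every `ε > 0` there is `B` such
that every real quadratic field `K` of discriminant `D > B` satisfies: every generator
`α` of `K` has `H(α) ≥ (1/√5)·√D`, and some generator has `H(α) ≤ (1/√5 + ε)·√D`. -/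
theorem Hmin_real_quadratic_tendsto_inv_sqrt_five
    (hyp : ∀ U : Set (ℝ × ℝ), U ⊆ regionG → IsOpen U → U.Nonempty →
      ∃ cU : ℝ, ∀ (K : Type) [Field K] [NumberField K],
        Module.finrank ℚ K = 2 → 0 < NumberField.discr K →
        (NumberField.discr K : ℝ) > cU →
        ∃ a b c : ℤ, 0 < a ∧ b ^ 2 - 4 * a * c = NumberField.discr K ∧
          1 < ((b : ℝ) + Real.sqrt (NumberField.discr K : ℝ)) / (2 * a) ∧
          -1 < ((b : ℝ) - Real.sqrt (NumberField.discr K : ℝ)) / (2 * a) ∧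
          ((b : ℝ) - Real.sqrt (NumberField.discr K : ℝ)) / (2 * a) < 0 ∧
          (((b : ℝ) + Real.sqrt (NumberField.discr K : ℝ)) / (2 * a),
            ((b : ℝ) - Real.sqrt (NumberField.discr K : ℝ)) / (2 * a)) ∈ U) :
    ∀ ε : ℝ, 0 < ε → ∃ B : ℝ,
      ∀ (K : Type) [Field K] [NumberField K],
        Module.finrank ℚ K = 2 → 0 < NumberField.discr K →
        (NumberField.discr K : ℝ) > B →
        ((∀ (α : K) (a b c : ℤ), ℚ⟮α⟯ = ⊤ →
            (a : K) * α ^ 2 + (b : K) * α + (c : K) = 0 →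
            Int.gcd (Int.gcd a b) c = 1 →
            (1 / Real.sqrt 5) * Real.sqrt (NumberField.discr K : ℝ) ≤
              ((max |a| (max |b| |c|) : ℤ) : ℝ)) ∧
         (∃ (α : K) (a b c : ℤ), ℚ⟮α⟯ = ⊤ ∧
            (a : K) * α ^ 2 + (b : K) * α + (c : K) = 0 ∧
            Int.gcd (Int.gcd a b) c = 1 ∧
            ((max |a| (max |b| |c|) : ℤ) : ℝ) ≤
              (1 / Real.sqrt 5 + ε) * Real.sqrt (NumberField.discr K : ℝ))) := by
  intro ε hε
  obtain ⟨cU, hcU⟩ := hyp (goodSet (1 / Real.sqrt 5 + ε))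
    (fun p hp => ⟨hp.1, hp.2.1, hp.2.2.1⟩) (goodSet_open _) ⟨_, goodSet_mem ε hε⟩
  refine ⟨cU, ?_⟩
  intro K _ _ hr hdpos hDB
  have hDR : (0 : ℝ) < (NumberField.discr K : ℝ) := by exact_mod_cast hdpos
  constructor
  · intro α a b c hgen heq hgcd
    have hirr := not_bot_of_gen hr α hgen
    have hle := lower_int hr hdpos α a b c heq hgcd hirr
    refine lower_real _ hDR a b c ?_
    exact_mod_cast hle
  · obtain ⟨σ, hσ2, hσirr⟩ := exists_sqrt_discr K hr
    obtain ⟨a, b, c, ha, hdisc, hred1, hred2, hred3, hmem⟩ := hcU K hr hdpos hDB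
    have h2a : (2 * (a : K)) ≠ 0 := by
      have : ((2 * a : ℤ) : K) ≠ 0 := by
        exact_mod_cast (by positivity : (0 : ℤ) < 2 * a).ne'
      push_cast at this
      exact this
    set α : K := ((b : K) + σ) / (2 * (a : K)) with hα
    have hσα : 2 * (a : K) * α - (b : K) = σ := by
      rw [hα]
      field_simp [right_ne_zero_of_mul h2a]
      ring
    have hquad : (a : K) * α ^ 2 + ((-b : ℤ) : K) * α + (c : K) = 0 := by
      have hs : (2 * (a : K) * α - (b : K)) ^ 2 = ((b ^ 2 - 4 * (a * c) : ℤ) : K) := by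
        rw [hσα, hσ2, ← hdisc]
        push_cast
        ring
      have h4 : (4 * (a : K)) * ((a : K) * α ^ 2 + ((-b : ℤ) : K) * α + (c : K)) = 0 := by
        push_cast at hs ⊢
        linear_combination hs
      rcases mul_eq_zero.1 h4 with hzero | hres
      · exfalso
        apply h2a
        have : (a : K) = 0 := by
          rcases mul_eq_zero.1 hzero with h' | h'
          · norm_num at h'
          · exact h'
        rw [this, mul_zero]
      · exact hres
    have hαirr : ∀ q : ℚ, (q : K) ≠ α := by
      intro q hq
      apply hσirr (2 * (a : ℚ) * q - (b : ℚ))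
      rw [← hσα, ← hq]
      push_cast
      ring
    have hgen : ℚ⟮α⟯ = ⊤ := gen_of_not_bot hr α hαirr
    obtain ⟨a', b', c', ha', hb', hc', hgcd⟩ := gcd_norm a (-b) c ha.ne'
    set g : ℤ := (Int.gcd (Int.gcd a (-b)) c : ℤ) with hgdef
    have hgne : g ≠ 0 := by
      intro h
      rw [h, zero_mul] at ha'
      exact ha.ne' ha'
    have hg0 : 0 ≤ g := Int.natCast_nonneg _
    have hg1 : 1 ≤ g := by omega
    have hgK : (g : K) ≠ 0 := by exact_mod_cast hgne
    refine ⟨α, a', b', c', hgen, ?_, hgcd, ?_⟩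
    · have haK : ((a : ℤ) : K) = (g : K) * (a' : K) := by rw [ha']; push_cast; ring
      have hbK : ((-b : ℤ) : K) = (g : K) * (b' : K) := by rw [hb']; push_cast; ring
      have hcK : ((c : ℤ) : K) = (g : K) * (c' : K) := by rw [hc']; push_cast; ring
      have hzero : (g : K) * ((a' : K) * α ^ 2 + (b' : K) * α + (c' : K)) = 0 := by
        calc (g : K) * ((a' : K) * α ^ 2 + (b' : K) * α + (c' : K))
            = ((a : ℤ) : K) * α ^ 2 + ((-b : ℤ) : K) * α + ((c : ℤ) : K) := by
              rw [haK, hbK, hcK]; ring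
          _ = 0 := hquad
      exact (mul_eq_zero.1 hzero).resolve_left hgK
    · have hdiscR : ((b : ℝ)) ^ 2 - 4 * (a : ℝ) * (c : ℝ) = (NumberField.discr K : ℝ) := by
        exact_mod_cast congrArg (fun z : ℤ => (z : ℝ)) hdisc
      obtain ⟨hba, hbb, hbc⟩ := bounds_of_mem (1 / Real.sqrt 5 + ε) _ hDR a b c ha hmem hdiscR
      have habsa : |a'| ≤ |a| := by
        rw [ha', abs_mul, abs_of_nonneg hg0]
        exact le_mul_of_one_le_left (abs_nonneg _) hg1
      have habsb : |b'| ≤ |b| := by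
        have : |b'| ≤ |(-b : ℤ)| := by
          rw [hb', abs_mul, abs_of_nonneg hg0]
          exact le_mul_of_one_le_left (abs_nonneg _) hg1
        rwa [abs_neg] at this
      have habsc : |c'| ≤ |c| := by
        rw [hc', abs_mul, abs_of_nonneg hg0]
        exact le_mul_of_one_le_left (abs_nonneg _) hg1
      have habsaR : |(a' : ℝ)| ≤ |(a : ℝ)| := by exact_mod_cast habsa
      have habsbR : |(b' : ℝ)| ≤ |(b : ℝ)| := by exact_mod_cast habsb
      have habscR : |(c' : ℝ)| ≤ |(c : ℝ)| := by exact_mod_cast habsc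
      push_cast
      exact max_le (habsaR.trans hba) (max_le (habsbR.trans hbb) (habscR.trans hbc))
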